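/- Let Γ₁ and Γ₂ be simple graphs, each with nonempty vertex set. Then the chromatic number of the Cartesian product Γ₁ □ Γ₂ equals the maximum of the chromatic numbers of Γ₁ and Γ₂. -/

import Mathlib

lemma boxProd_colorable_aux {V₁ V₂ : Type*} (Γ₁ : SimpleGraph V₁) (Γ₂ : SimpleGraph V₂)
    {m : ℕ} (h₁ : Γ₁.Colorable (m + 1)) (h₂ : Γ₂.Colorable (m + 1)) :
    (Γ₁ □ Γ₂).Colorable (m + 1) := by
  obtain ⟨c₁⟩ := h₁
  obtain ⟨c₂⟩ := h₂
  have key : ∀ a b : Fin (m + 1),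
      ((a : ℕ) : ZMod (m + 1)) = ((b : ℕ) : ZMod (m + 1)) → a = b := by
    intro a b h
    apply Fin.ext
    have := congrArg ZMod.val h
    rwa [ZMod.val_cast_of_lt a.isLt, ZMod.val_cast_of_lt b.isLt] at this
  refine ⟨SimpleGraph.Coloring.mk
    (fun x => (((c₁ x.1 : ℕ) : ZMod (m + 1)) + ((c₂ x.2 : ℕ) : ZMod (m + 1)))) ?_⟩
  rintro ⟨a₁, b₁⟩ ⟨a₂, b₂⟩ hadj
  rcases hadj with ⟨h, rfl⟩ | ⟨h, rfl⟩
  · intro hcontra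
    exact c₁.valid h (key _ _ (add_right_cancel hcontra))
  · intro hcontra
    exact c₂.valid h (key _ _ (add_left_cancel hcontra))

/-- For simple graphs `Γ₁`, `Γ₂` on nonempty vertex sets, the chromatic
number of the Cartesian (box) product `Γ₁ □ Γ₂` is the maximum of the chromatic numbers of
`Γ₁` and `Γ₂`. -/
theorem stmt_7 {V₁ V₂ : Type*} [Nonempty V₁] [Nonempty V₂]
    (Γ₁ : SimpleGraph V₁) (Γ₂ : SimpleGraph V₂) :
    (Γ₁ □ Γ₂).chromaticNumber = max Γ₁.chromaticNumber Γ₂.chromaticNumber := by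
  refine le_antisymm ?_ ?_
  · -- upper bound
    rcases eq_or_ne (max Γ₁.chromaticNumber Γ₂.chromaticNumber) ⊤ with h | h
    · simp [h]
    · obtain ⟨n, hn⟩ := WithTop.ne_top_iff_exists.mp h
      have h₁ : Γ₁.Colorable n :=
        SimpleGraph.chromaticNumber_le_iff_colorable.mp (le_trans (le_max_left _ _) hn.ge)
      have h₂ : Γ₂.Colorable n :=
        SimpleGraph.chromaticNumber_le_iff_colorable.mp (le_trans (le_max_right _ _) hn.ge)
      match n, h₁, h₂, hn with
      | 0, h₁, _, _ => exact (h₁.some (Classical.arbitrary V₁)).elim0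
      | (m+1), h₁, h₂, hn =>
        exact hn ▸ (boxProd_colorable_aux Γ₁ Γ₂ h₁ h₂).chromaticNumber_le
  · -- lower bound
    refine max_le ?_ ?_
    · exact SimpleGraph.chromaticNumber_mono_of_hom
        (Γ₁.boxProdLeft Γ₂ (Classical.arbitrary V₂)).toHom
    · exact SimpleGraph.chromaticNumber_mono_of_hom
        (Γ₁.boxProdRight Γ₂ (Classical.arbitrary V₁)).toHom
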